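/- There exists a finite unital ring R that is alternative (i.e., (a,a,b) = 0 and (a,b,b) = 0 for all a,b ∈ R), non-associative, non-commutative, and centrally essential. -/

import Mathlib

set_option linter.unusedSectionVars false

/-- The associator `(a,b,c) = (ab)c - a(bc)` in a not necessarily associative ring. -/
def naAssociator {R : Type*} [NonAssocRing R] (a b c : R) : R := a * b * c - a * (b * c)

/-- The commutator `[a,b] = ab - ba` in a not necessarily associative ring. -/
def naCommutator {R : Type*} [NonAssocRing R] (a b : R) : R := a * b - b * a

/-- The associative center `N(R)`. -/
def assocCenter (R : Type*) [NonAssocRing R] : Set R :=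
  {x | ∀ a b : R, naAssociator x a b = 0 ∧ naAssociator a x b = 0 ∧ naAssociator a b x = 0}

/-- The commutative center `K(R)`. -/
def commCenter (R : Type*) [NonAssocRing R] : Set R :=
  {x | ∀ a : R, naCommutator x a = 0}

/-- The center `Z(R) = N(R) ∩ K(R)`. -/
def ringCenter (R : Type*) [NonAssocRing R] : Set R :=
  assocCenter R ∩ commCenter R

/-- A ring is centrally essential if for every nonzero `r` there is a central `z`
with `z * r ≠ 0` central. -/
def IsCentrallyEssential (R : Type*) [NonAssocRing R] : Prop :=
  ∀ r : R, r ≠ 0 → ∃ z ∈ ringCenter R, z * r ≠ 0 ∧ z * r ∈ ringCenter R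

/-- A ring is left `N`-essential. -/
def IsLeftNEssential (R : Type*) [NonAssocRing R] : Prop :=
  ∀ r : R, r ≠ 0 → ∃ n ∈ assocCenter R, n * r ≠ 0 ∧ n * r ∈ assocCenter R

/-- A ring is right `N`-essential. -/
def IsRightNEssential (R : Type*) [NonAssocRing R] : Prop :=
  ∀ r : R, r ≠ 0 → ∃ n ∈ assocCenter R, r * n ≠ 0 ∧ r * n ∈ assocCenter R

/-- `I` is an essential ideal of `B` (elementwise formulation). -/
def EssentialIn {R : Type*} [NonAssocRing R] (I B : Set R) : Prop :=
  ∀ b ∈ B, b ≠ 0 → ∃ d ∈ B, d * b ≠ 0 ∧ d * b ∈ I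

/-- The Cayley–Dickson ring `(A, α)`: the abelian group `A ⊕ A` with multiplication
`(a₁,a₂)(a₃,a₄) = (a₁a₃ + α(a₄a₂*), a₁*a₄ + a₃a₂)`. -/
@[ext]
structure CD (A : Type*) (α : A) : Type _ where
  re : A
  im : A

namespace CD

variable {A : Type*} [NonAssocRing A] [StarRing A] {α : A}

instance : Zero (CD A α) := ⟨⟨0, 0⟩⟩
instance : Add (CD A α) := ⟨fun z w => ⟨z.re + w.re, z.im + w.im⟩⟩
instance : Neg (CD A α) := ⟨fun z => ⟨-z.re, -z.im⟩⟩
instance : One (CD A α) := ⟨⟨1, 0⟩⟩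
instance : Mul (CD A α) :=
  ⟨fun z w => ⟨z.re * w.re + α * (w.im * star z.im), star z.re * w.im + w.re * z.im⟩⟩
instance : Star (CD A α) := ⟨fun z => ⟨star z.re, -z.im⟩⟩

@[simp] theorem zero_re : (0 : CD A α).re = 0 := rfl
@[simp] theorem zero_im : (0 : CD A α).im = 0 := rfl
@[simp] theorem one_re : (1 : CD A α).re = 1 := rfl
@[simp] theorem one_im : (1 : CD A α).im = 0 := rfl
@[simp] theorem add_re (z w : CD A α) : (z + w).re = z.re + w.re := rfl
@[simp] theorem add_im (z w : CD A α) : (z + w).im = z.im + w.im := rfl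
@[simp] theorem neg_re (z : CD A α) : (-z).re = -z.re := rfl
@[simp] theorem neg_im (z : CD A α) : (-z).im = -z.im := rfl
@[simp] theorem mul_re (z w : CD A α) :
    (z * w).re = z.re * w.re + α * (w.im * star z.im) := rfl
@[simp] theorem mul_im (z w : CD A α) :
    (z * w).im = star z.re * w.im + w.re * z.im := rfl
@[simp] theorem star_re (z : CD A α) : (star z).re = star z.re := rfl
@[simp] theorem star_im (z : CD A α) : (star z).im = -z.im := rfl
@[simp] theorem mk_re (x y : A) : (⟨x, y⟩ : CD A α).re = x := rfl
@[simp] theorem mk_im (x y : A) : (⟨x, y⟩ : CD A α).im = y := rfl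

instance : NonAssocRing (CD A α) where
  add_assoc a b c := by ext <;> simp [add_assoc]
  zero_add a := by ext <;> simp
  add_zero a := by ext <;> simp
  add_comm a b := by ext <;> simp [add_comm]
  neg_add_cancel a := by ext <;> simp
  nsmul := nsmulRec
  zsmul := zsmulRec
  left_distrib a b c := by ext <;> simp [mul_add, add_mul] <;> abel
  right_distrib a b c := by ext <;> simp [mul_add, add_mul, star_add] <;> abel
  zero_mul a := by ext <;> simp
  mul_zero a := by ext <;> simp
  one_mul a := by ext <;> simp
  mul_one a := by ext <;> simp

instance {A : Type*} {α : A} [Finite A] : Finite (CD A α) :=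
  Finite.of_injective (fun z : CD A α => (z.re, z.im))
    (fun z w h => by cases z; cases w; simpa using h)

/-- If `α` commutes with every element and `star α = α`, then `(a,b) ↦ (a*, -b)`
makes `(A, α)` a star ring. -/
def starRing (h : ∀ t : A, α * t = t * α) (hs : star α = α) : StarRing (CD A α) where
  star := star
  star_involutive z := by ext <;> simp
  star_mul z w := by
    ext <;>
      simp [StarMul.star_mul, star_star, StarAddMonoid.star_add, star_neg, hs, h, mul_neg, neg_mul,
        neg_add] <;>
      abel
  star_add z w := by ext <;> simp [StarAddMonoid.star_add, neg_add] <;> abel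

/-- An element of the form `(x, 0)` with `x` commuting with everything and `star x = x`
commutes with every element of `(A, α)`. -/
theorem mk_zero_comm {x : A} (hx : ∀ t : A, x * t = t * x) (hsx : star x = x) (z : CD A α) :
    (⟨x, 0⟩ : CD A α) * z = z * ⟨x, 0⟩ := by
  ext <;> simp [hsx, hx]

end CD


section Example17

set_option synthInstance.maxHeartbeats 1000000
set_option maxHeartbeats 3000000

attribute [local instance] starRingOfComm

@[simp] theorem star_zmod4 (x : ZMod 4) : star x = x := rfl

local instance : StarRing (CD (ZMod 4) (-1)) where
  star := star
  star_involutive := (CD.starRing (α := (-1 : ZMod 4)) (fun t => mul_comm _ t) rfl).star_involutive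
  star_mul := (CD.starRing (α := (-1 : ZMod 4)) (fun t => mul_comm _ t) rfl).star_mul
  star_add := (CD.starRing (α := (-1 : ZMod 4)) (fun t => mul_comm _ t) rfl).star_add

local instance : StarRing (CD (CD (ZMod 4) (-1)) (-1)) where
  star := star
  star_involutive := (CD.starRing (α := (-1 : CD (ZMod 4) (-1)))
    (fun t => by rw [neg_one_mul, mul_neg_one]) (by ext <;> simp)).star_involutive
  star_mul := (CD.starRing (α := (-1 : CD (ZMod 4) (-1)))
    (fun t => by rw [neg_one_mul, mul_neg_one]) (by ext <;> simp)).star_mul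
  star_add := (CD.starRing (α := (-1 : CD (ZMod 4) (-1)))
    (fun t => by rw [neg_one_mul, mul_neg_one]) (by ext <;> simp)).star_add

abbrev Rex : Type := CD (CD (CD (ZMod 4) (-1)) (-1)) (-1)

instance instDecEqCD {A : Type*} {α : A} [DecidableEq A] : DecidableEq (CD A α) :=
  fun z w => decidable_of_iff (z.re = w.re ∧ z.im = w.im)
    ⟨fun h => CD.ext h.1 h.2, fun h => by subst h; exact ⟨rfl, rfl⟩⟩

set_option maxHeartbeats 3000000 in
theorem rex_alt : ∀ a b : Rex, naAssociator a a b = 0 ∧ naAssociator a b b = 0 := by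
  intro a b
  constructor <;>
  · ext <;>
    · simp only [naAssociator, naCommutator, sub_eq_add_neg, CD.mul_re, CD.mul_im,
        CD.add_re, CD.add_im, CD.neg_re, CD.neg_im, CD.star_re, CD.star_im, CD.zero_re,
        CD.zero_im, CD.one_re, CD.one_im, CD.mk_re, CD.mk_im, star_zmod4, neg_mul, mul_neg, neg_neg, neg_add_rev,
        star_neg, star_add, star_zero, neg_zero]
      ring

theorem z4_four : ∀ u : ZMod 4, u + u + (u + u) = 0 := by decide

theorem rex_four (w : Rex) : w + w + (w + w) = 0 := by
  ext <;> exact z4_four _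

set_option maxHeartbeats 3000000 in
theorem rex_assoc_even (x a b : Rex) : ∃ w : Rex, naAssociator x a b = w + w := by
  refine ⟨⟨⟨⟨0, -a.im.im.im*b.im.re.im*x.re.im.im + a.im.im.im*b.im.re.re*x.re.im.re + a.im.im.im*b.re.im.im*x.im.re.im - a.im.im.im*b.re.im.re*x.im.re.re - a.im.im.re*b.im.re.im*x.re.im.re - a.im.im.re*b.im.re.re*x.re.im.im + a.im.im.re*b.re.im.im*x.im.re.re + a.im.im.re*b.re.im.re*x.im.re.im + a.im.re.im*b.im.im.im*x.re.im.im + a.im.re.im*b.im.im.re*x.re.im.re - a.im.re.im*b.re.im.im*x.im.im.im - a.im.re.im*b.re.im.re*x.im.im.re - a.im.re.re*b.im.im.im*x.re.im.re + a.im.re.re*b.im.im.re*x.re.im.im - a.im.re.re*b.re.im.im*x.im.im.re + a.im.re.re*b.re.im.re*x.im.im.im - a.re.im.im*b.im.im.im*x.im.re.im - a.re.im.im*b.im.im.re*x.im.re.re + a.re.im.im*b.im.re.im*x.im.im.im + a.re.im.im*b.im.re.re*x.im.im.re + a.re.im.re*b.im.im.im*x.im.re.re - a.re.im.re*b.im.im.re*x.im.re.im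 + a.re.im.re*b.im.re.im*x.im.im.re - a.re.im.re*b.im.re.re*x.im.im.im⟩, ⟨-a.im.im.im*b.im.im.re*x.re.im.im - a.im.im.im*b.im.re.re*x.re.re.im + a.im.im.im*b.re.im.im*x.im.im.re + a.im.im.im*b.re.re.im*x.im.re.re + a.im.im.re*b.im.im.im*x.re.im.im + a.im.im.re*b.im.re.im*x.re.re.im - a.im.im.re*b.re.im.im*x.im.im.im - a.im.im.re*b.re.re.im*x.im.re.im - a.im.re.im*b.im.im.re*x.re.re.im + a.im.re.im*b.im.re.re*x.re.im.im - a.im.re.im*b.re.im.im*x.im.re.re + a.im.re.im*b.re.re.im*x.im.im.re + a.im.re.re*b.im.im.im*x.re.re.im - a.im.re.re*b.im.re.im*x.re.im.im + a.im.re.re*b.re.im.im*x.im.re.im - a.im.re.re*b.re.re.im*x.im.im.im - a.re.im.im*b.im.im.im*x.im.im.re + a.re.im.im*b.im.im.re*x.im.im.im + a.re.im.im*b.im.re.im*x.im.re.re - a.re.im.im*b.im.re.re*x.im.re.im - a.re.re.im*b.im.im.im*x.im.re.re + a.re.re.im*b.im.im.re*x.im.re.im - a.re.re.im*b.im.re.im*x.im.im.re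 + a.re.re.im*b.im.re.re*x.im.im.im, a.im.im.im*b.im.im.re*x.re.im.re + a.im.im.im*b.im.re.im*x.re.re.im - a.im.im.im*b.re.im.re*x.im.im.re - a.im.im.im*b.re.re.im*x.im.re.im - a.im.im.re*b.im.im.im*x.re.im.re + a.im.im.re*b.im.re.re*x.re.re.im + a.im.im.re*b.re.im.re*x.im.im.im - a.im.im.re*b.re.re.im*x.im.re.re - a.im.re.im*b.im.im.im*x.re.re.im - a.im.re.im*b.im.re.re*x.re.im.re + a.im.re.im*b.re.im.re*x.im.re.re + a.im.re.im*b.re.re.im*x.im.im.im - a.im.re.re*b.im.im.re*x.re.re.im + a.im.re.re*b.im.re.im*x.re.im.re - a.im.re.re*b.re.im.re*x.im.re.im + a.im.re.re*b.re.re.im*x.im.im.re + a.re.im.re*b.im.im.im*x.im.im.re - a.re.im.re*b.im.im.re*x.im.im.im - a.re.im.re*b.im.re.im*x.im.re.re + a.re.im.re*b.im.re.re*x.im.re.im + a.re.re.im*b.im.im.im*x.im.re.im + a.re.re.im*b.im.im.re*x.im.re.re - a.re.re.im*b.im.re.im*x.im.im.im - a.re.re.im*b.im.re.re*x.im.im.re⟩⟩,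 ⟨⟨-a.im.im.im*b.im.im.re*x.im.re.im + a.im.im.im*b.im.re.im*x.im.im.re + a.im.im.im*b.re.im.re*x.re.re.im - a.im.im.im*b.re.re.im*x.re.im.re + a.im.im.re*b.im.im.im*x.im.re.im - a.im.im.re*b.im.re.im*x.im.im.im - a.im.im.re*b.re.im.im*x.re.re.im + a.im.im.re*b.re.re.im*x.re.im.im - a.im.re.im*b.im.im.im*x.im.im.re + a.im.re.im*b.im.im.re*x.im.im.im + a.im.re.im*b.re.im.im*x.re.im.re - a.im.re.im*b.re.im.re*x.re.im.im + a.re.im.im*b.im.im.re*x.re.re.im - a.re.im.im*b.im.re.im*x.re.im.re + a.re.im.im*b.re.im.re*x.im.re.im - a.re.im.im*b.re.re.im*x.im.im.re - a.re.im.re*b.im.im.im*x.re.re.im + a.re.im.re*b.im.re.im*x.re.im.im - a.re.im.re*b.re.im.im*x.im.re.im + a.re.im.re*b.re.re.im*x.im.im.im + a.re.re.im*b.im.im.im*x.re.im.re - a.re.re.im*b.im.im.re*x.re.im.im + a.re.re.im*b.re.im.im*x.im.im.re - a.re.re.im*b.re.im.re*x.im.im.im, a.im.im.im*b.im.im.re*x.im.re.re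 - a.im.im.im*b.im.re.re*x.im.im.re - a.im.im.im*b.re.im.im*x.re.re.im + a.im.im.im*b.re.re.im*x.re.im.im - a.im.im.re*b.im.im.im*x.im.re.re + a.im.im.re*b.im.re.re*x.im.im.im - a.im.im.re*b.re.im.re*x.re.re.im + a.im.im.re*b.re.re.im*x.re.im.re + a.im.re.re*b.im.im.im*x.im.im.re - a.im.re.re*b.im.im.re*x.im.im.im - a.im.re.re*b.re.im.im*x.re.im.re + a.im.re.re*b.re.im.re*x.re.im.im + a.re.im.im*b.im.im.im*x.re.re.im + a.re.im.im*b.im.re.re*x.re.im.re - a.re.im.im*b.re.im.re*x.im.re.re - a.re.im.im*b.re.re.im*x.im.im.im + a.re.im.re*b.im.im.re*x.re.re.im - a.re.im.re*b.im.re.re*x.re.im.im + a.re.im.re*b.re.im.im*x.im.re.re - a.re.im.re*b.re.re.im*x.im.im.re - a.re.re.im*b.im.im.im*x.re.im.im - a.re.re.im*b.im.im.re*x.re.im.re + a.re.re.im*b.re.im.im*x.im.im.im + a.re.re.im*b.re.im.re*x.im.im.re⟩, ⟨-a.im.im.im*b.im.re.im*x.im.re.re + a.im.im.im*b.im.re.re*x.im.re.im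 - a.im.im.im*b.re.im.im*x.re.im.re + a.im.im.im*b.re.im.re*x.re.im.im + a.im.re.im*b.im.im.im*x.im.re.re - a.im.re.im*b.im.re.re*x.im.im.im + a.im.re.im*b.re.im.re*x.re.re.im - a.im.re.im*b.re.re.im*x.re.im.re - a.im.re.re*b.im.im.im*x.im.re.im + a.im.re.re*b.im.re.im*x.im.im.im + a.im.re.re*b.re.im.im*x.re.re.im - a.im.re.re*b.re.re.im*x.re.im.im + a.re.im.im*b.im.im.im*x.re.im.re - a.re.im.im*b.im.re.re*x.re.re.im - a.re.im.im*b.re.im.re*x.im.im.im + a.re.im.im*b.re.re.im*x.im.re.re - a.re.im.re*b.im.im.im*x.re.im.im - a.re.im.re*b.im.re.im*x.re.re.im + a.re.im.re*b.re.im.im*x.im.im.im + a.re.im.re*b.re.re.im*x.im.re.im + a.re.re.im*b.im.re.im*x.re.im.re + a.re.re.im*b.im.re.re*x.re.im.im - a.re.re.im*b.re.im.im*x.im.re.re - a.re.re.im*b.re.im.re*x.im.re.im, a.im.im.re*b.im.re.im*x.im.re.re - a.im.im.re*b.im.re.re*x.im.re.im + a.im.im.re*b.re.im.im*x.re.im.re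 - a.im.im.re*b.re.im.re*x.re.im.im - a.im.re.im*b.im.im.re*x.im.re.re + a.im.re.im*b.im.re.re*x.im.im.re + a.im.re.im*b.re.im.im*x.re.re.im - a.im.re.im*b.re.re.im*x.re.im.im + a.im.re.re*b.im.im.re*x.im.re.im - a.im.re.re*b.im.re.im*x.im.im.re - a.im.re.re*b.re.im.re*x.re.re.im + a.im.re.re*b.re.re.im*x.re.im.re - a.re.im.im*b.im.im.re*x.re.im.re - a.re.im.im*b.im.re.im*x.re.re.im + a.re.im.im*b.re.im.re*x.im.im.re + a.re.im.im*b.re.re.im*x.im.re.im + a.re.im.re*b.im.im.re*x.re.im.im + a.re.im.re*b.im.re.re*x.re.re.im - a.re.im.re*b.re.im.im*x.im.im.re - a.re.im.re*b.re.re.im*x.im.re.re + a.re.re.im*b.im.re.im*x.re.im.im - a.re.re.im*b.im.re.re*x.re.im.re - a.re.re.im*b.re.im.im*x.im.re.im + a.re.re.im*b.re.im.re*x.im.re.re⟩⟩⟩, ?_⟩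
  ext <;>
  · simp only [naAssociator, naCommutator, sub_eq_add_neg, CD.mul_re, CD.mul_im,
        CD.add_re, CD.add_im, CD.neg_re, CD.neg_im, CD.star_re, CD.star_im, CD.zero_re,
        CD.zero_im, CD.one_re, CD.one_im, CD.mk_re, CD.mk_im, star_zmod4, neg_mul, mul_neg, neg_neg, neg_add_rev,
        star_neg, star_add, star_zero, neg_zero]
    ring

set_option maxHeartbeats 1000000 in
theorem rex_comm_even (x a : Rex) : ∃ w : Rex, naCommutator x a = w + w := by
  refine ⟨⟨⟨⟨0, a.im.im.im*x.im.im.re - a.im.im.re*x.im.im.im - a.im.re.im*x.im.re.re + a.im.re.re*x.im.re.im - a.re.im.im*x.re.im.re + a.re.im.re*x.re.im.im⟩, ⟨-a.im.im.im*x.im.re.im - a.im.im.re*x.im.re.re + a.im.re.im*x.im.im.im + a.im.re.re*x.im.im.re + a.re.im.im*x.re.re.im - a.re.re.im*x.re.im.im, -a.im.im.im*x.im.re.re + a.im.im.re*x.im.re.im - a.im.re.im*x.im.im.re + a.im.re.re*x.im.im.im - a.re.im.re*x.re.re.im + a.re.re.im*x.re.im.re⟩⟩, ⟨⟨a.im.im.im*x.re.im.im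 + a.im.im.re*x.re.im.re + a.im.re.im*x.re.re.im - a.re.im.im*x.im.im.im - a.re.im.re*x.im.im.re - a.re.re.im*x.im.re.im, a.im.im.im*x.re.im.re - a.im.im.re*x.re.im.im - a.im.re.re*x.re.re.im + a.re.im.im*x.im.im.re - a.re.im.re*x.im.im.im + a.re.re.im*x.im.re.re⟩, ⟨-a.im.im.im*x.re.re.im + a.im.re.im*x.re.im.im - a.im.re.re*x.re.im.re - a.re.im.im*x.im.re.im + a.re.im.re*x.im.re.re + a.re.re.im*x.im.im.im, a.im.im.re*x.re.re.im - a.im.re.im*x.re.im.re - a.im.re.re*x.re.im.im + a.re.im.im*x.im.re.re + a.re.im.re*x.im.re.im - a.re.re.im*x.im.im.re⟩⟩⟩, ?_⟩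
  ext <;>
  · simp only [naAssociator, naCommutator, sub_eq_add_neg, CD.mul_re, CD.mul_im,
        CD.add_re, CD.add_im, CD.neg_re, CD.neg_im, CD.star_re, CD.star_im, CD.zero_re,
        CD.zero_im, CD.one_re, CD.one_im, CD.mk_re, CD.mk_im, star_zmod4, neg_mul, mul_neg, neg_neg, neg_add_rev,
        star_neg, star_add, star_zero, neg_zero]
    ring

theorem rex_two_assoc (x a b : Rex) : naAssociator x a b + naAssociator x a b = 0 := by
  obtain ⟨w, hw⟩ := rex_assoc_even x a b
  rw [hw]; exact rex_four w

theorem rex_two_comm (x a : Rex) : naCommutator x a + naCommutator x a = 0 := by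
  obtain ⟨w, hw⟩ := rex_comm_even x a
  rw [hw]; exact rex_four w

theorem rex_double_central (x : Rex) : (x + x) ∈ ringCenter Rex := by
  refine ⟨fun a b => ⟨?_, ?_, ?_⟩, fun a => ?_⟩
  · have h : naAssociator (x + x) a b = naAssociator x a b + naAssociator x a b := by
      simp only [naAssociator, add_mul, mul_add, sub_eq_add_neg, neg_add_rev]; abel
    rw [h, rex_two_assoc]
  · have h : naAssociator a (x + x) b = naAssociator a x b + naAssociator a x b := by
      simp only [naAssociator, add_mul, mul_add, sub_eq_add_neg, neg_add_rev]; abel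
    rw [h, rex_two_assoc]
  · have h : naAssociator a b (x + x) = naAssociator a b x + naAssociator a b x := by
      simp only [naAssociator, add_mul, mul_add, sub_eq_add_neg, neg_add_rev]; abel
    rw [h, rex_two_assoc]
  · have h : naCommutator (x + x) a = naCommutator x a + naCommutator x a := by
      simp only [naCommutator, add_mul, mul_add, sub_eq_add_neg, neg_add_rev]; abel
    rw [h, rex_two_comm]

theorem rex_one_central : (1 : Rex) ∈ ringCenter Rex := by
  refine ⟨fun a b => ⟨?_, ?_, ?_⟩, fun a => ?_⟩ <;>
    simp [naAssociator, naCommutator]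

def hfZ (c : ZMod 4) : ZMod 4 := if c = 2 then 1 else 0

theorem hfZ_spec : ∀ c : ZMod 4, c + c = 0 → hfZ c + hfZ c = c := by decide

theorem rex_half (r : Rex) (h : r + r = 0) : ∃ s : Rex, s + s = r := by
  have h1 : r.re.re.re + r.re.re.re = 0 := congrArg (fun z : Rex => z.re.re.re) h
  have h2 : r.re.re.im + r.re.re.im = 0 := congrArg (fun z : Rex => z.re.re.im) h
  have h3 : r.re.im.re + r.re.im.re = 0 := congrArg (fun z : Rex => z.re.im.re) h
  have h4 : r.re.im.im + r.re.im.im = 0 := congrArg (fun z : Rex => z.re.im.im) h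
  have h5 : r.im.re.re + r.im.re.re = 0 := congrArg (fun z : Rex => z.im.re.re) h
  have h6 : r.im.re.im + r.im.re.im = 0 := congrArg (fun z : Rex => z.im.re.im) h
  have h7 : r.im.im.re + r.im.im.re = 0 := congrArg (fun z : Rex => z.im.im.re) h
  have h8 : r.im.im.im + r.im.im.im = 0 := congrArg (fun z : Rex => z.im.im.im) h
  refine ⟨⟨⟨⟨hfZ r.re.re.re, hfZ r.re.re.im⟩, ⟨hfZ r.re.im.re, hfZ r.re.im.im⟩⟩,
    ⟨⟨hfZ r.im.re.re, hfZ r.im.re.im⟩, ⟨hfZ r.im.im.re, hfZ r.im.im.im⟩⟩⟩, ?_⟩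
  ext <;> simp only [CD.add_re, CD.add_im, CD.mk_re, CD.mk_im] <;>
    first
      | exact hfZ_spec _ h1 | exact hfZ_spec _ h2 | exact hfZ_spec _ h3
      | exact hfZ_spec _ h4 | exact hfZ_spec _ h5 | exact hfZ_spec _ h6
      | exact hfZ_spec _ h7 | exact hfZ_spec _ h8

theorem rex_ce : IsCentrallyEssential Rex := by
  intro r hr
  by_cases h : r + r = 0
  · obtain ⟨s, hs⟩ := rex_half r h
    refine ⟨1, rex_one_central, by simpa using hr, ?_⟩
    rw [one_mul, ← hs]
    exact rex_double_central s
  · refine ⟨1 + 1, ?_, ?_, ?_⟩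
    · simpa using rex_double_central 1
    · rwa [add_mul, one_mul]
    · rw [add_mul, one_mul]
      exact rex_double_central r

theorem stmt17 :
    ∃ (R : Type) (_ : NonAssocRing R), Finite R ∧
      (∀ a b : R, naAssociator a a b = 0 ∧ naAssociator a b b = 0) ∧
      (¬ ∀ a b c : R, a * b * c = a * (b * c)) ∧
      (¬ ∀ a b : R, a * b = b * a) ∧
      IsCentrallyEssential R := by
  refine ⟨Rex, inferInstance, inferInstance, rex_alt, fun h => absurd
    (h ⟨⟨⟨0,1⟩,0⟩,0⟩ ⟨⟨0,⟨1,0⟩⟩,0⟩ ⟨0,⟨⟨1,0⟩,0⟩⟩) (by decide), fun h => absurd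
    (h ⟨⟨⟨0,1⟩,0⟩,0⟩ ⟨⟨0,⟨1,0⟩⟩,0⟩) (by decide), rex_ce⟩

end Example17
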